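/- Let A = [[a, b], [c, d]] ∈ SL(2,ℤ) with |a + d| > 2 (an Anosov matrix). Then the presented group Γ = ⟨t₁, x₁, t₂, x₂ ∣ t₁x₁t₁⁻¹ = x₁⁻¹, t₂x₂t₂⁻¹ = x₂⁻¹, t₁² = (t₂²)^a x₂^c, x₁ = (t₂²)^b x₂^d⟩ (the fundamental group of the Anosov double with gluing matrix A) has Grossman's Property A: every class-preserving automorphism of Γ is inner. -/

import Mathlib

/-- A group `G` has Grossman's Property A if every class-preserving automorphism
(i.e. one sending each element to a conjugate of itself) is inner. -/
def HasPropertyA (G : Type*) [Group G] : Prop :=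
  ∀ φ : G ≃* G, (∀ g : G, IsConj g (φ g)) → ∃ h : G, ∀ g : G, φ g = h * g * h⁻¹

/-- The relators of the fundamental group of the Anosov double with gluing matrix
`A = [[a, b], [c, d]]`:
`⟨t₁, x₁, t₂, x₂ ∣ t₁x₁t₁⁻¹ = x₁⁻¹, t₂x₂t₂⁻¹ = x₂⁻¹, t₁² = (t₂²)^a x₂^c, x₁ = (t₂²)^b x₂^d⟩`,
with generators `t₁, x₁, t₂, x₂` being `0, 1, 2, 3`. -/
def anosovDoubleRels (a b c d : ℤ) : Set (FreeGroup (Fin 4)) :=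
  let t₁ : FreeGroup (Fin 4) := FreeGroup.of 0
  let x₁ : FreeGroup (Fin 4) := FreeGroup.of 1
  let t₂ : FreeGroup (Fin 4) := FreeGroup.of 2
  let x₂ : FreeGroup (Fin 4) := FreeGroup.of 3
  {t₁ * x₁ * t₁⁻¹ * x₁, t₂ * x₂ * t₂⁻¹ * x₂,
    t₁⁻¹ * t₁⁻¹ * t₂ ^ (2 * a) * x₂ ^ c, x₁⁻¹ * t₂ ^ (2 * b) * x₂ ^ d}

namespace AnosovPf

variable {a b c d : ℤ}

abbrev P (a b c d : ℤ) := PresentedGroup (anosovDoubleRels a b c d)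

def T1 : P a b c d := PresentedGroup.of 0
def X1 : P a b c d := PresentedGroup.of 1
def T2 : P a b c d := PresentedGroup.of 2
def X2 : P a b c d := PresentedGroup.of 3

/-- ι (n, m) = (t₂²)^n x₂^m -/
def iH (v : ℤ × ℤ) : P a b c d := ((T2:P a b c d) ^ (2:ℤ)) ^ v.1 * X2 ^ v.2

lemma relhold (r : FreeGroup (Fin 4)) (hr : r ∈ anosovDoubleRels a b c d) :
    PresentedGroup.mk (anosovDoubleRels a b c d) r = 1 := by
  rw [show (1 : P a b c d) = PresentedGroup.mk _ 1 from rfl]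
  apply (QuotientGroup.eq_one_iff _).mpr
  exact Subgroup.subset_normalClosure hr

lemma rel1 : (T1 : P a b c d) * X1 * T1⁻¹ * X1 = 1 := by
  have := relhold (a := a) (b := b) (c := c) (d := d)
    (FreeGroup.of 0 * FreeGroup.of 1 * (FreeGroup.of 0)⁻¹ * FreeGroup.of 1)
    (by simp [anosovDoubleRels])
  simpa [T1, X1, PresentedGroup.of] using this

lemma rel2 : (T2 : P a b c d) * X2 * T2⁻¹ * X2 = 1 := by
  have := relhold (a := a) (b := b) (c := c) (d := d)
    (FreeGroup.of 2 * FreeGroup.of 3 * (FreeGroup.of 2)⁻¹ * FreeGroup.of 3)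
    (by simp [anosovDoubleRels])
  simpa [T2, X2, PresentedGroup.of] using this

lemma rel3 : ((T1 : P a b c d))⁻¹ * T1⁻¹ * T2 ^ (2*a) * X2 ^ c = 1 := by
  have := relhold (a := a) (b := b) (c := c) (d := d)
    ((FreeGroup.of 0)⁻¹ * (FreeGroup.of 0)⁻¹ * (FreeGroup.of 2) ^ (2*a) * (FreeGroup.of 3) ^ c)
    (by simp [anosovDoubleRels])
  simpa [T1, T2, X2, PresentedGroup.of] using this

lemma rel4 : ((X1 : P a b c d))⁻¹ * T2 ^ (2*b) * X2 ^ d = 1 := by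
  have := relhold (a := a) (b := b) (c := c) (d := d)
    ((FreeGroup.of 1)⁻¹ * (FreeGroup.of 2) ^ (2*b) * (FreeGroup.of 3) ^ d)
    (by simp [anosovDoubleRels])
  simpa [X1, T2, X2, PresentedGroup.of] using this

end AnosovPf
namespace AnosovPf

variable {a b c d : ℤ}

/-- action of t₂ on H -/
def Jv (v : ℤ × ℤ) : ℤ × ℤ := (v.1, -v.2)

/-- action of t₁ on H -/
def Nv (a b c d : ℤ) (v : ℤ × ℤ) : ℤ × ℤ :=
  ((a*d+b*c)*v.1 - 2*a*b*v.2, 2*c*d*v.1 - (a*d+b*c)*v.2)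

lemma t2x2 : (T2 : P a b c d) * X2 * T2⁻¹ = X2⁻¹ :=
  eq_inv_of_mul_eq_one_left rel2

lemma t1x1 : (T1 : P a b c d) * X1 * T1⁻¹ = X1⁻¹ :=
  eq_inv_of_mul_eq_one_left rel1

lemma t2x2' : (T2 : P a b c d) * X2⁻¹ * T2⁻¹ = X2 := by
  have := congrArg Inv.inv (t2x2 (a := a) (b := b) (c := c) (d := d))
  simpa [mul_inv_rev, mul_assoc] using this

lemma comm2 : Commute ((T2 : P a b c d) ^ (2:ℤ)) X2 := by
  have e1 : (T2 : P a b c d) * X2 = X2⁻¹ * T2 := by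
    calc (T2 : P a b c d) * X2 = (T2 * X2 * T2⁻¹) * T2 := by group
      _ = X2⁻¹ * T2 := by rw [t2x2]
  have e2 : (T2 : P a b c d) * X2⁻¹ = X2 * T2 := by
    calc (T2 : P a b c d) * X2⁻¹ = (T2 * X2⁻¹ * T2⁻¹) * T2 := by group
      _ = X2 * T2 := by rw [t2x2']
  have h2 : (T2 : P a b c d) ^ (2:ℤ) = T2 * T2 := zpow_two T2
  unfold Commute SemiconjBy
  rw [h2]
  calc (T2 : P a b c d) * T2 * X2 = T2 * (T2 * X2) := by group
    _ = T2 * (X2⁻¹ * T2) := by rw [e1]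
    _ = (T2 * X2⁻¹) * T2 := by group
    _ = (X2 * T2) * T2 := by rw [e2]
    _ = X2 * (T2 * T2) := by group

lemma iH_add (v w : ℤ × ℤ) : iH (a := a) (b := b) (c := c) (d := d) (v + w) = iH v * iH w := by
  unfold iH
  have hc : Commute (((T2 : P a b c d) ^ (2:ℤ)) ^ w.1) (X2 ^ v.2) :=
    (comm2.symm.zpow_zpow v.2 w.1).symm
  rw [Prod.fst_add, Prod.snd_add, zpow_add, zpow_add]
  calc ((T2:P a b c d)^(2:ℤ))^v.1 * ((T2:P a b c d)^(2:ℤ))^w.1 * (X2 ^ v.2 * X2 ^ w.2)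
      = ((T2:P a b c d)^(2:ℤ))^v.1 * (((T2:P a b c d)^(2:ℤ))^w.1 * X2 ^ v.2) * X2 ^ w.2 := by
        group
    _ = ((T2:P a b c d)^(2:ℤ))^v.1 * (X2 ^ v.2 * ((T2:P a b c d)^(2:ℤ))^w.1) * X2 ^ w.2 := by
        rw [hc.eq]
    _ = _ := by group

lemma iH_zero : iH (a := a) (b := b) (c := c) (d := d) 0 = 1 := by simp [iH]

lemma iH_inv (v : ℤ × ℤ) : iH (a := a) (b := b) (c := c) (d := d) (-v) = (iH v)⁻¹ := by
  have h : iH (a := a) (b := b) (c := c) (d := d) v * iH (-v) = 1 := by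
    rw [← iH_add]; simp [iH_zero]
  exact (inv_eq_of_mul_eq_one_right h).symm

lemma iH_zsmul (m : ℤ) (v : ℤ × ℤ) :
    iH (a := a) (b := b) (c := c) (d := d) (m • v) = (iH v) ^ m := by
  unfold iH
  have hc : Commute (((T2 : P a b c d) ^ (2:ℤ)) ^ v.1) (X2 ^ v.2) :=
    (comm2.symm.zpow_zpow v.2 v.1).symm
  have h1 : (m • v).1 = v.1 * m := by simp [mul_comm]
  have h2 : (m • v).2 = v.2 * m := by simp [mul_comm]
  rw [h1, h2, zpow_mul, zpow_mul, ← hc.mul_zpow]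

end AnosovPf
namespace AnosovPf

variable {a b c d : ℤ}

lemma X1_eq : (X1 : P a b c d) = iH (b, d) := by
  have h := rel4 (a := a) (b := b) (c := c) (d := d)
  rw [mul_assoc] at h
  have h2 := inv_mul_eq_one.mp h
  rw [h2]
  unfold iH
  norm_num [← zpow_mul]
  exact zpow_mul _ _ _

lemma T1sq : (T1 : P a b c d) * T1 = iH (a, c) := by
  have h := rel3 (a := a) (b := b) (c := c) (d := d)
  have h' : ((T1 : P a b c d) * T1)⁻¹ * (T2 ^ (2*a) * X2 ^ c) = 1 := by
    rw [← h]; group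
  have h2 := inv_mul_eq_one.mp h'
  rw [h2]
  unfold iH
  norm_num [← zpow_mul]
  exact zpow_mul _ _ _

lemma conjT2 (v : ℤ × ℤ) : (T2 : P a b c d) * iH v * T2⁻¹ = iH (Jv v) := by
  have e0 : (T2 : P a b c d) * T2 ^ (2:ℤ) * T2⁻¹ = T2 ^ (2:ℤ) := by group
  calc (T2 : P a b c d) * iH v * T2⁻¹
      = (T2 * (T2^(2:ℤ))^v.1 * T2⁻¹) * (T2 * X2^v.2 * T2⁻¹) := by unfold iH; group
    _ = (T2 * T2^(2:ℤ) * T2⁻¹)^v.1 * (T2*X2*T2⁻¹)^v.2 := by rw [conj_zpow, conj_zpow]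
    _ = (T2^(2:ℤ))^v.1 * (X2⁻¹)^v.2 := by rw [t2x2, e0]
    _ = iH (Jv v) := by unfold iH Jv; rw [inv_zpow, ← zpow_neg]

lemma conjT1_tau (hdet : a*d - b*c = 1) :
    (T1 : P a b c d) * iH (a, c) * T1⁻¹ = iH (a, c) := by
  rw [← T1sq]; group

lemma conjT1_x1 : (T1 : P a b c d) * iH (b, d) * T1⁻¹ = iH (-(b, d)) := by
  rw [← X1_eq, t1x1, X1_eq, ← iH_inv]

lemma conjT1 (hdet : a*d - b*c = 1) (v : ℤ × ℤ) :
    (T1 : P a b c d) * iH v * T1⁻¹ = iH (Nv a b c d v) := by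
  have hv : v = (d*v.1 - b*v.2) • ((a,c) : ℤ×ℤ) + (a*v.2 - c*v.1) • ((b,d) : ℤ×ℤ) := by
    have h1 : v.1 = (d*v.1 - b*v.2) * a + (a*v.2 - c*v.1) * b := by linear_combination (-v.1) * hdet
    have h2 : v.2 = (d*v.1 - b*v.2) * c + (a*v.2 - c*v.1) * d := by linear_combination (-v.2) * hdet
    ext
    · simpa [smul_eq_mul, mul_comm] using h1
    · simpa [smul_eq_mul, mul_comm] using h2
  have key : (T1 : P a b c d) * iH v * T1⁻¹
      = iH ((d*v.1 - b*v.2) • ((a,c) : ℤ×ℤ) + (a*v.2 - c*v.1) • (-((b,d) : ℤ×ℤ))) := by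
    rw [iH_add, iH_zsmul, iH_zsmul]
    calc (T1 : P a b c d) * iH v * T1⁻¹
        = (T1 * iH ((d*v.1 - b*v.2) • ((a,c) : ℤ×ℤ)) * T1⁻¹)
          * (T1 * iH ((a*v.2 - c*v.1) • ((b,d) : ℤ×ℤ)) * T1⁻¹) := by
          rw [show (T1 : P a b c d) * iH v * T1⁻¹
              = T1 * (iH ((d*v.1 - b*v.2) • ((a,c) : ℤ×ℤ)) * iH ((a*v.2 - c*v.1) • ((b,d) : ℤ×ℤ))) * T1⁻¹
            from by rw [← iH_add, ← hv]]
          group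
      _ = (T1 * iH ((a,c):ℤ×ℤ) * T1⁻¹)^(d*v.1 - b*v.2) * (T1 * iH ((b,d):ℤ×ℤ) * T1⁻¹)^(a*v.2 - c*v.1) := by
          rw [iH_zsmul, iH_zsmul, conj_zpow, conj_zpow]
      _ = (iH ((a,c):ℤ×ℤ))^(d*v.1 - b*v.2) * (iH (-((b,d):ℤ×ℤ)))^(a*v.2 - c*v.1) := by
          rw [conjT1_tau hdet, conjT1_x1]
  rw [key]
  congr 1
  unfold Nv
  ext <;> simp [smul_eq_mul] <;> ring

end AnosovPf
namespace AnosovPf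

variable {a b c d : ℤ}

def Zel : P a b c d := T2 * T1

instance instGroupAddAutZZ : Group (AddAut (ℤ × ℤ)) where
  mul g h := AddEquiv.trans h g
  one := AddEquiv.refl _
  inv := AddEquiv.symm
  mul_assoc _ _ _ := rfl
  one_mul _ := rfl
  mul_one _ := rfl
  inv_mul_cancel := AddEquiv.self_trans_symm

/-- the action of z = t₂t₁ on H, as an additive automorphism of ℤ² -/
def MZ (a b c d : ℤ) (hdet : a*d - b*c = 1) : AddAut (ℤ × ℤ) where
  toFun v := ((a*d+b*c)*v.1 - 2*a*b*v.2, (a*d+b*c)*v.2 - 2*c*d*v.1)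
  invFun v := ((a*d+b*c)*v.1 + 2*a*b*v.2, (a*d+b*c)*v.2 + 2*c*d*v.1)
  left_inv v := by
    ext
    · show (a*d+b*c)*((a*d+b*c)*v.1 - 2*a*b*v.2) + 2*a*b*((a*d+b*c)*v.2 - 2*c*d*v.1) = v.1
      linear_combination (v.1*(a*d-b*c+1)) * hdet
    · show (a*d+b*c)*((a*d+b*c)*v.2 - 2*c*d*v.1) + 2*c*d*((a*d+b*c)*v.1 - 2*a*b*v.2) = v.2
      linear_combination (v.2*(a*d-b*c+1)) * hdet
  right_inv v := by
    ext
    · show (a*d+b*c)*((a*d+b*c)*v.1 + 2*a*b*v.2) - 2*a*b*((a*d+b*c)*v.2 + 2*c*d*v.1) = v.1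
      linear_combination (v.1*(a*d-b*c+1)) * hdet
    · show (a*d+b*c)*((a*d+b*c)*v.2 + 2*c*d*v.1) - 2*c*d*((a*d+b*c)*v.1 + 2*a*b*v.2) = v.2
      linear_combination (v.2*(a*d-b*c+1)) * hdet
  map_add' v w := by ext <;> simp <;> ring

lemma NN (hdet : a*d - b*c = 1) (v : ℤ × ℤ) : Nv a b c d (Nv a b c d v) = v := by
  unfold Nv
  ext
  · show (a*d+b*c)*((a*d+b*c)*v.1 - 2*a*b*v.2) - 2*a*b*(2*c*d*v.1 - (a*d+b*c)*v.2) = v.1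
    linear_combination (v.1*(a*d-b*c+1)) * hdet
  · show 2*c*d*((a*d+b*c)*v.1 - 2*a*b*v.2) - (a*d+b*c)*(2*c*d*v.1 - (a*d+b*c)*v.2) = v.2
    linear_combination (v.2*(a*d-b*c+1)) * hdet

/-- the action of t₁ on H, as an additive automorphism -/
def NA (a b c d : ℤ) (hdet : a*d - b*c = 1) : AddAut (ℤ × ℤ) where
  toFun := Nv a b c d
  invFun := Nv a b c d
  left_inv v := NN hdet v
  right_inv v := NN hdet v
  map_add' v w := by unfold Nv; ext <;> simp <;> ring

lemma MZ_apply (hdet : a*d - b*c = 1) (v : ℤ × ℤ) :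
    MZ a b c d hdet v = Jv (Nv a b c d v) := by
  show ((a*d+b*c)*v.1 - 2*a*b*v.2, (a*d+b*c)*v.2 - 2*c*d*v.1) = _
  unfold Jv Nv; ext <;> simp <;> ring

lemma MZ_inv_apply (hdet : a*d - b*c = 1) (v : ℤ × ℤ) :
    (MZ a b c d hdet)⁻¹ v = Nv a b c d (Jv v) := by
  show ((a*d+b*c)*v.1 + 2*a*b*v.2, (a*d+b*c)*v.2 + 2*c*d*v.1) = _
  unfold Jv Nv; ext <;> simp <;> ring

lemma NA_apply (hdet : a*d - b*c = 1) (v : ℤ × ℤ) : NA a b c d hdet v = Nv a b c d v := rfl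

-- multiplication-form conjugation lemmas
lemma conjT2m (v : ℤ × ℤ) : (T2 : P a b c d) * iH v = iH (Jv v) * T2 := by
  calc (T2 : P a b c d) * iH v = (T2 * iH v * T2⁻¹) * T2 := by group
    _ = iH (Jv v) * T2 := by rw [conjT2]

lemma conjT1m (hdet : a*d - b*c = 1) (v : ℤ × ℤ) :
    (T1 : P a b c d) * iH v = iH (Nv a b c d v) * T1 := by
  calc (T1 : P a b c d) * iH v = (T1 * iH v * T1⁻¹) * T1 := by group
    _ = iH (Nv a b c d v) * T1 := by rw [conjT1 hdet]

lemma conjZm (hdet : a*d - b*c = 1) (v : ℤ × ℤ) :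
    (Zel : P a b c d) * iH v = iH (MZ a b c d hdet v) * Zel := by
  unfold Zel
  rw [MZ_apply hdet]
  calc (T2 : P a b c d) * T1 * iH v = T2 * (T1 * iH v) := by group
    _ = T2 * (iH (Nv a b c d v) * T1) := by rw [conjT1m hdet]
    _ = (T2 * iH (Nv a b c d v)) * T1 := by group
    _ = iH (Jv (Nv a b c d v)) * (T2 * T1) := by rw [conjT2m]; group

lemma conjZmInv (hdet : a*d - b*c = 1) (v : ℤ × ℤ) :
    (Zel : P a b c d)⁻¹ * iH v = iH ((MZ a b c d hdet)⁻¹ v) * Zel⁻¹ := by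
  have h := conjZm hdet (a := a) (b := b) (c := c) (d := d) ((MZ a b c d hdet)⁻¹ v)
  rw [show MZ a b c d hdet ((MZ a b c d hdet)⁻¹ v) = v from (MZ a b c d hdet).apply_symm_apply v] at h
  calc (Zel : P a b c d)⁻¹ * iH v
      = Zel⁻¹ * (iH v * Zel) * Zel⁻¹ := by group
    _ = Zel⁻¹ * (Zel * iH ((MZ a b c d hdet)⁻¹ v)) * Zel⁻¹ := by rw [h]
    _ = iH ((MZ a b c d hdet)⁻¹ v) * Zel⁻¹ := by group

lemma conjZpow (hdet : a*d - b*c = 1) (k : ℤ) (v : ℤ × ℤ) :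
    (Zel : P a b c d) ^ k * iH v = iH ((MZ a b c d hdet ^ k) v) * Zel ^ k := by
  induction k using Int.induction_on generalizing v with
  | zero => simp only [zpow_zero, one_mul, mul_one]; rfl
  | succ n ih =>
    have hz : (Zel : P a b c d) ^ ((n:ℤ)+1) = Zel ^ (n:ℤ) * Zel := zpow_add_one _ _
    have hm : (MZ a b c d hdet ^ ((n:ℤ)+1)) v = (MZ a b c d hdet ^ (n:ℤ)) (MZ a b c d hdet v) := by
      rw [zpow_add_one]; rfl
    rw [hz, hm]
    calc (Zel : P a b c d) ^ (n:ℤ) * Zel * iH v = Zel ^ (n:ℤ) * (Zel * iH v) := by group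
      _ = Zel ^ (n:ℤ) * (iH (MZ a b c d hdet v) * Zel) := by rw [conjZm hdet]
      _ = (Zel ^ (n:ℤ) * iH (MZ a b c d hdet v)) * Zel := by group
      _ = iH ((MZ a b c d hdet ^ (n:ℤ)) (MZ a b c d hdet v)) * (Zel ^ (n:ℤ) * Zel) := by
          rw [ih]; group
  | pred n ih =>
    have hz : (Zel : P a b c d) ^ (-(n:ℤ)-1) = Zel ^ (-(n:ℤ)) * Zel⁻¹ := zpow_sub_one _ _
    have hm : (MZ a b c d hdet ^ (-(n:ℤ)-1)) v
        = (MZ a b c d hdet ^ (-(n:ℤ))) ((MZ a b c d hdet)⁻¹ v) := by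
      rw [zpow_sub_one]; rfl
    rw [hz, hm]
    calc (Zel : P a b c d) ^ (-(n:ℤ)) * Zel⁻¹ * iH v = Zel ^ (-(n:ℤ)) * (Zel⁻¹ * iH v) := by group
      _ = Zel ^ (-(n:ℤ)) * (iH ((MZ a b c d hdet)⁻¹ v) * Zel⁻¹) := by rw [conjZmInv hdet]
      _ = (Zel ^ (-(n:ℤ)) * iH ((MZ a b c d hdet)⁻¹ v)) * Zel⁻¹ := by group
      _ = iH ((MZ a b c d hdet ^ (-(n:ℤ))) ((MZ a b c d hdet)⁻¹ v)) * (Zel ^ (-(n:ℤ)) * Zel⁻¹) := by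
          rw [ih]; group

lemma conjZpow' (hdet : a*d - b*c = 1) (k : ℤ) (v : ℤ × ℤ) :
    (Zel : P a b c d) ^ k * iH v * (Zel ^ k)⁻¹ = iH ((MZ a b c d hdet ^ k) v) := by
  rw [conjZpow hdet]; group

end AnosovPf
namespace AnosovPf

variable {a b c d : ℤ}

/-- coefficients of Mz^j = u_j I + v_j K -/
def Useq (lam : ℤ) : ℕ → ℤ × ℤ
  | 0 => (1, 0)
  | (j+1) => (lam * (Useq lam j).1 + (lam^2 - 1) * (Useq lam j).2,
              (Useq lam j).1 + lam * (Useq lam j).2)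

lemma Useq_succ (lam : ℤ) (j : ℕ) :
    Useq lam (j+1) = (lam * (Useq lam j).1 + (lam^2 - 1) * (Useq lam j).2,
      (Useq lam j).1 + lam * (Useq lam j).2) := rfl

lemma MZc (hdet : a*d - b*c = 1) (v : ℤ × ℤ) :
    MZ a b c d hdet v = ((a*d+b*c)*v.1 - 2*a*b*v.2, (a*d+b*c)*v.2 - 2*c*d*v.1) := rfl

lemma mzpow_formula (hdet : a*d - b*c = 1) (j : ℕ) (v : ℤ × ℤ) :
    ((MZ a b c d hdet) ^ j) v
      = ((Useq (a*d+b*c) j).1 * v.1 - (Useq (a*d+b*c) j).2 * (2*a*b) * v.2,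
         (Useq (a*d+b*c) j).1 * v.2 - (Useq (a*d+b*c) j).2 * (2*c*d) * v.1) := by
  have hkey : 4*a*b*c*d = (a*d+b*c)^2 - 1 := by
    linear_combination (-(a*d - b*c + 1)) * hdet
  induction j with
  | zero => simp [Useq]; rfl
  | succ n ih =>
    have hstep : ((MZ a b c d hdet) ^ (n+1)) v = MZ a b c d hdet (((MZ a b c d hdet) ^ n) v) := by
      rw [pow_succ']; rfl
    rw [hstep, ih, MZc hdet, Useq_succ]
    simp only [Prod.mk.injEq]
    refine ⟨?_, ?_⟩
    · show (a*d+b*c) * ((Useq (a*d+b*c) n).1 * v.1 - (Useq (a*d+b*c) n).2 * (2*a*b) * v.2)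
          - 2*a*b*((Useq (a*d+b*c) n).1 * v.2 - (Useq (a*d+b*c) n).2 * (2*c*d) * v.1)
          = ((a*d+b*c) * (Useq (a*d+b*c) n).1 + ((a*d+b*c)^2 - 1) * (Useq (a*d+b*c) n).2,
              (Useq (a*d+b*c) n).1 + (a*d+b*c) * (Useq (a*d+b*c) n).2).1 * v.1
            - ((a*d+b*c) * (Useq (a*d+b*c) n).1 + ((a*d+b*c)^2 - 1) * (Useq (a*d+b*c) n).2,
              (Useq (a*d+b*c) n).1 + (a*d+b*c) * (Useq (a*d+b*c) n).2).2 * (2*a*b) * v.2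
      simp only [Prod.fst, Prod.snd]
      linear_combination ((Useq (a*d+b*c) n).2 * v.1) * hkey
    · show (a*d+b*c) * ((Useq (a*d+b*c) n).1 * v.2 - (Useq (a*d+b*c) n).2 * (2*c*d) * v.1)
          - 2*c*d*((Useq (a*d+b*c) n).1 * v.1 - (Useq (a*d+b*c) n).2 * (2*a*b) * v.2)
          = ((a*d+b*c) * (Useq (a*d+b*c) n).1 + ((a*d+b*c)^2 - 1) * (Useq (a*d+b*c) n).2,
              (Useq (a*d+b*c) n).1 + (a*d+b*c) * (Useq (a*d+b*c) n).2).1 * v.2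
            - ((a*d+b*c) * (Useq (a*d+b*c) n).1 + ((a*d+b*c)^2 - 1) * (Useq (a*d+b*c) n).2,
              (Useq (a*d+b*c) n).1 + (a*d+b*c) * (Useq (a*d+b*c) n).2).2 * (2*c*d) * v.1
      simp only [Prod.fst, Prod.snd]
      linear_combination ((Useq (a*d+b*c) n).2 * v.2) * hkey

lemma Useq_pos (lam : ℤ) (h3 : 3 ≤ lam) :
    ∀ j : ℕ, 1 ≤ (Useq lam (j+1)).2 ∧ 2 * (Useq lam (j+1)).2 ≤ (Useq lam (j+1)).1 := by
  intro j
  induction j with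
  | zero =>
    constructor
    · show 1 ≤ (1 : ℤ) + lam * 0; omega
    · show 2 * ((1:ℤ) + lam * 0) ≤ lam * 1 + (lam^2-1) * 0; nlinarith
  | succ n ih =>
    obtain ⟨h1, h2⟩ := ih
    constructor
    · show 1 ≤ (Useq lam (n+1)).1 + lam * (Useq lam (n+1)).2
      nlinarith
    · show 2 * ((Useq lam (n+1)).1 + lam * (Useq lam (n+1)).2)
          ≤ lam * (Useq lam (n+1)).1 + (lam^2-1) * (Useq lam (n+1)).2
      have e1 : (lam-2)*(2*(Useq lam (n+1)).2) ≤ (lam-2)*(Useq lam (n+1)).1 :=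
        mul_le_mul_of_nonneg_left h2 (by omega)
      have e2 : 0 ≤ (lam^2-5)*(Useq lam (n+1)).2 :=
        mul_nonneg (by nlinarith) (by omega)
      nlinarith [e1, e2]

lemma Useq_flip (lam : ℤ) :
    ∀ j : ℕ, (Useq (-lam) j).1 = (-1)^j * (Useq lam j).1
      ∧ (Useq (-lam) j).2 = -((-1)^j) * (Useq lam j).2 := by
  intro j
  induction j with
  | zero => simp [Useq]
  | succ n ih =>
    obtain ⟨h1, h2⟩ := ih
    constructor
    · show (-lam) * (Useq (-lam) n).1 + ((-lam)^2 - 1) * (Useq (-lam) n).2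
        = (-1)^(n+1) * (lam * (Useq lam n).1 + (lam^2 - 1) * (Useq lam n).2)
      rw [h1, h2]; ring
    · show (Useq (-lam) n).1 + (-lam) * (Useq (-lam) n).2
        = -((-1)^(n+1)) * ((Useq lam n).1 + lam * (Useq lam n).2)
      rw [h1, h2]; ring

lemma Useq_neg_one :
    ∀ j : ℕ, (Useq (-1) j).1 = (-1)^j ∧ (Useq (-1) j).2 = -((-1)^j) * j := by
  intro j
  induction j with
  | zero => simp [Useq]
  | succ n ih =>
    obtain ⟨h1, h2⟩ := ih
    constructor
    · show (-1) * (Useq (-1) n).1 + ((-1)^2 - 1) * (Useq (-1) n).2 = (-1)^(n+1)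
      rw [h1]; ring
    · show (Useq (-1) n).1 + (-1) * (Useq (-1) n).2 = -((-1)^(n+1)) * (n+1 : ℕ)
      rw [h1, h2]; push_cast; ring

lemma Useq_snd_ne (hdet : a*d - b*c = 1) (htr : 2 < |a + d|) :
    ∀ j : ℕ, 0 < j → (Useq (a*d+b*c) j).2 ≠ 0 := by
  intro j hj
  set lam := a*d+b*c with hlam
  have hodd : lam = 2*(a*d) - 1 := by rw [hlam]; linear_combination -hdet
  have hne1 : a*d = 1 → False := by
    intro h1
    rcases Int.mul_eq_one_iff_eq_one_or_neg_one.mp h1 with ⟨ha, hd⟩ | ⟨ha, hd⟩ <;>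
      rw [ha, hd] at htr <;> norm_num at htr
  have hcases : 3 ≤ lam ∨ lam = 1 ∨ lam = -1 ∨ lam ≤ -3 := by omega
  obtain ⟨j', rfl⟩ : ∃ j', j = j' + 1 := ⟨j - 1, by omega⟩
  rcases hcases with h | h | h | h
  · have := (Useq_pos lam h j').1
    omega
  · exact absurd (by omega : a*d = 1) hne1
  · rw [h]
    have := (Useq_neg_one (j'+1)).2
    rw [this]
    have hpm : ((-1:ℤ))^(j'+1) = 1 ∨ ((-1:ℤ))^(j'+1) = -1 := by
      rcases Nat.even_or_odd (j'+1) with he | ho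
      · exact Or.inl (Even.neg_one_pow he)
      · exact Or.inr (Odd.neg_one_pow ho)
    rcases hpm with h' | h' <;> rw [h'] <;> simp <;> omega
  · have h3 : 3 ≤ -lam := by omega
    have hflip := (Useq_flip (-lam) (j'+1)).2
    rw [neg_neg] at hflip
    have hp := (Useq_pos (-lam) h3 j').1
    rw [hflip]
    have hpm : ((-1:ℤ))^(j'+1) = 1 ∨ ((-1:ℤ))^(j'+1) = -1 := by
      rcases Nat.even_or_odd (j'+1) with he | ho
      · exact Or.inl (Even.neg_one_pow he)
      · exact Or.inr (Odd.neg_one_pow ho)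
    rcases hpm with h' | h' <;> rw [h'] <;> simp <;> omega

end AnosovPf
namespace AnosovPf

variable {a b c d : ℤ}

lemma contradiction_cases (hdet : a*d - b*c = 1) (htr : 2 < |a + d|)
    (hab : a*b = 0) (hcd : c*d = 0) : False := by
  have hne1 : a*d = 1 → False := by
    intro h1
    rcases Int.mul_eq_one_iff_eq_one_or_neg_one.mp h1 with ⟨ha, hd⟩ | ⟨ha, hd⟩ <;>
      rw [ha, hd] at htr <;> norm_num at htr
  rcases mul_eq_zero.mp hab with ha | hb <;> rcases mul_eq_zero.mp hcd with hc | hd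
  · rw [ha, hc] at hdet; simp at hdet
  · rw [ha, hd] at htr; simp at htr
  · rw [hb, hc] at hdet; simp at hdet; exact hne1 hdet
  · rw [hb, hd] at hdet; simp at hdet

lemma MZpow_nat_eq_one (hdet : a*d - b*c = 1) (htr : 2 < |a + d|) (j : ℕ)
    (h : ∀ v, ((MZ a b c d hdet)^j) v = v) : j = 0 := by
  by_contra hj
  have hj' : 0 < j := Nat.pos_of_ne_zero hj
  have hw := Useq_snd_ne hdet htr j hj'
  have h1 := h (1, 0)
  have h2 := h (0, 1)
  rw [mzpow_formula hdet] at h1 h2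
  simp only [Prod.mk.injEq] at h1 h2
  obtain ⟨h1a, h1b⟩ := h1
  obtain ⟨h2a, h2b⟩ := h2
  -- h1b : U.1 * 0 - U.2 * (2*c*d) * 1 = 0 ; h2a : U.1 * 0 - U.2 * (2*a*b) * 0? check
  have hcd : c*d = 0 := by
    have : (Useq (a*d+b*c) j).2 * (2*(c*d)) = 0 := by linarith [h1b]
    rcases mul_eq_zero.mp this with h' | h'
    · exact absurd h' hw
    · omega
  have hab : a*b = 0 := by
    have : (Useq (a*d+b*c) j).2 * (2*(a*b)) = 0 := by linarith [h2a]
    rcases mul_eq_zero.mp this with h' | h'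
    · exact absurd h' hw
    · omega
  exact contradiction_cases hdet htr hab hcd

lemma MZzpow_eq_one (hdet : a*d - b*c = 1) (htr : 2 < |a + d|) (k : ℤ)
    (h : (MZ a b c d hdet)^k = 1) : k = 0 := by
  obtain ⟨n, rfl | rfl⟩ := Int.eq_nat_or_neg k
  · have hpt : ∀ v, ((MZ a b c d hdet)^n) v = v := by
      intro v
      have : ((MZ a b c d hdet)^(n:ℤ)) v = v := by rw [h]; rfl
      rwa [zpow_natCast] at this
    rw [MZpow_nat_eq_one hdet htr n hpt]; rfl
  · have h' : (MZ a b c d hdet)^((n:ℤ)) = 1 := by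
      have := congrArg Inv.inv h
      rwa [← zpow_neg, neg_neg, inv_one] at this
    have hpt : ∀ v, ((MZ a b c d hdet)^n) v = v := by
      intro v
      have : ((MZ a b c d hdet)^(n:ℤ)) v = v := by rw [h']; rfl
      rwa [zpow_natCast] at this
    rw [MZpow_nat_eq_one hdet htr n hpt]; rfl

lemma NA_sq (hdet : a*d - b*c = 1) : NA a b c d hdet * NA a b c d hdet = 1 :=
  AddEquiv.ext fun v => NN hdet v

lemma NA_inv (hdet : a*d - b*c = 1) : (NA a b c d hdet)⁻¹ = NA a b c d hdet :=
  inv_eq_of_mul_eq_one_right (NA_sq hdet)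

lemma NA_MZ (hdet : a*d - b*c = 1) :
    NA a b c d hdet * MZ a b c d hdet = (MZ a b c d hdet)⁻¹ * NA a b c d hdet := by
  apply AddEquiv.ext
  intro v
  show NA a b c d hdet (MZ a b c d hdet v) = (MZ a b c d hdet)⁻¹ (NA a b c d hdet v)
  rw [NA_apply, NA_apply, MZ_apply hdet, MZ_inv_apply hdet]

lemma flip_pow (hdet : a*d - b*c = 1) (k : ℤ) :
    NA a b c d hdet * (MZ a b c d hdet)^k = (MZ a b c d hdet)^(-k) * NA a b c d hdet := by
  have hconj : NA a b c d hdet * MZ a b c d hdet * (NA a b c d hdet)⁻¹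
      = (MZ a b c d hdet)⁻¹ := by
    rw [NA_MZ hdet]; group
  have h2 : NA a b c d hdet * (MZ a b c d hdet)^k * (NA a b c d hdet)⁻¹
      = ((MZ a b c d hdet)⁻¹)^k := by
    rw [← hconj, conj_zpow]
  calc NA a b c d hdet * (MZ a b c d hdet)^k
      = (NA a b c d hdet * (MZ a b c d hdet)^k * (NA a b c d hdet)⁻¹) * NA a b c d hdet := by
        group
    _ = ((MZ a b c d hdet)⁻¹)^k * NA a b c d hdet := by rw [h2]
    _ = (MZ a b c d hdet)^(-k) * NA a b c d hdet := by rw [inv_zpow, ← zpow_neg]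

lemma comm_imp_zero (hdet : a*d - b*c = 1) (htr : 2 < |a + d|) (k : ℤ)
    (h : (MZ a b c d hdet)^k * NA a b c d hdet = NA a b c d hdet * (MZ a b c d hdet)^k) :
    k = 0 := by
  have h2 : (MZ a b c d hdet)^k = (MZ a b c d hdet)^(-k) := by
    have := h.trans (flip_pow hdet k)
    exact mul_right_cancel this
  have h3 : (MZ a b c d hdet)^(2*k) = 1 := by
    rw [two_mul, zpow_add]
    nth_rewrite 2 [h2]
    rw [← zpow_add]
    simp
  have := MZzpow_eq_one hdet htr _ h3
  omega

end AnosovPf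
namespace AnosovPf

variable {a b c d : ℤ}

/-- translations of ℚ² as permutations -/
def trH : Multiplicative (ℚ × ℚ) →* Equiv.Perm (ℚ × ℚ) where
  toFun w := Equiv.addRight w.toAdd
  map_one' := by
    apply Equiv.ext; intro p
    show p + Multiplicative.toAdd (1 : Multiplicative (ℚ × ℚ)) = p
    simp
  map_mul' w u := by
    apply Equiv.ext; intro p
    show p + (Multiplicative.toAdd w + Multiplicative.toAdd u)
        = (p + Multiplicative.toAdd u) + Multiplicative.toAdd w
    rw [← add_assoc, add_right_comm]

lemma trH_apply (w : ℚ × ℚ) (p : ℚ × ℚ) : trH (Multiplicative.ofAdd w) p = p + w := rfl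

def permJQ : Equiv.Perm (ℚ × ℚ) :=
  Function.Involutive.toPerm (fun p => (p.1, -p.2)) (fun p => by simp)

def NQfun (a b c d : ℤ) (p : ℚ × ℚ) : ℚ × ℚ :=
  (((a:ℚ)*d+b*c)*p.1 - 2*a*b*p.2, 2*c*d*p.1 - ((a:ℚ)*d+b*c)*p.2)

lemma NQ_invol (hdet : a*d - b*c = 1) : Function.Involutive (NQfun a b c d) := by
  have hdetQ : (a:ℚ)*d - b*c = 1 := by exact_mod_cast hdet
  intro p
  unfold NQfun
  ext
  · show ((a:ℚ)*d+b*c)*(((a:ℚ)*d+b*c)*p.1 - 2*a*b*p.2) - 2*a*b*(2*c*d*p.1 - ((a:ℚ)*d+b*c)*p.2) = p.1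
    linear_combination (p.1*((a:ℚ)*d-b*c+1)) * hdetQ
  · show 2*c*d*(((a:ℚ)*d+b*c)*p.1 - 2*a*b*p.2) - ((a:ℚ)*d+b*c)*(2*c*d*p.1 - ((a:ℚ)*d+b*c)*p.2) = p.2
    linear_combination (p.2*((a:ℚ)*d-b*c+1)) * hdetQ

def permNQ (a b c d : ℤ) (hdet : a*d - b*c = 1) : Equiv.Perm (ℚ × ℚ) :=
  Function.Involutive.toPerm (NQfun a b c d) (NQ_invol hdet)

lemma permNQ_apply (hdet : a*d - b*c = 1) (p : ℚ × ℚ) :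
    permNQ a b c d hdet p = NQfun a b c d p := rfl

lemma permJQ_apply (p : ℚ × ℚ) : permJQ p = (p.1, -p.2) := rfl

lemma permNQ_sq (hdet : a*d - b*c = 1) : permNQ a b c d hdet * permNQ a b c d hdet = 1 := by
  apply Equiv.ext; intro p
  show permNQ a b c d hdet (permNQ a b c d hdet p) = p
  rw [permNQ_apply, permNQ_apply]
  exact NQ_invol hdet p

lemma permJQ_sq : (permJQ : Equiv.Perm (ℚ × ℚ)) * permJQ = 1 := by
  apply Equiv.ext; intro p
  show permJQ (permJQ p) = p
  simp [permJQ_apply]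

lemma permNQ_inv (hdet : a*d - b*c = 1) : (permNQ a b c d hdet)⁻¹ = permNQ a b c d hdet :=
  inv_eq_of_mul_eq_one_right (permNQ_sq hdet)

lemma permJQ_inv : (permJQ : Equiv.Perm (ℚ × ℚ))⁻¹ = permJQ :=
  inv_eq_of_mul_eq_one_right permJQ_sq

lemma permNQ_tr (hdet : a*d - b*c = 1) (w : ℚ × ℚ) :
    permNQ a b c d hdet * trH (Multiplicative.ofAdd w)
      = trH (Multiplicative.ofAdd (NQfun a b c d w)) * permNQ a b c d hdet := by
  apply Equiv.ext; intro p
  show permNQ a b c d hdet (trH (Multiplicative.ofAdd w) p)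
      = trH (Multiplicative.ofAdd (NQfun a b c d w)) (permNQ a b c d hdet p)
  rw [trH_apply, trH_apply, permNQ_apply, permNQ_apply]
  unfold NQfun
  ext <;> simp <;> ring

lemma permJQ_tr (w : ℚ × ℚ) :
    (permJQ : Equiv.Perm (ℚ × ℚ)) * trH (Multiplicative.ofAdd w)
      = trH (Multiplicative.ofAdd (w.1, -w.2)) * permJQ := by
  apply Equiv.ext; intro p
  show permJQ (trH (Multiplicative.ofAdd w) p) = trH (Multiplicative.ofAdd (w.1, -w.2)) (permJQ p)
  rw [trH_apply, trH_apply, permJQ_apply, permJQ_apply]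
  ext <;> simp <;> ring

/-- images of the four generators -/
def Fimg (a b c d : ℤ) (hdet : a*d - b*c = 1) : Fin 4 → Equiv.Perm (ℚ × ℚ)
  | 0 => trH (Multiplicative.ofAdd ((a:ℚ)/2, (c:ℚ)/2)) * permNQ a b c d hdet
  | 1 => trH (Multiplicative.ofAdd ((b:ℚ), (d:ℚ)))
  | 2 => trH (Multiplicative.ofAdd ((1:ℚ)/2, (0:ℚ))) * permJQ
  | 3 => trH (Multiplicative.ofAdd ((0:ℚ), (1:ℚ)))

lemma trH_zpow (w : ℚ × ℚ) (k : ℤ) :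
    (trH (Multiplicative.ofAdd w))^k = trH (Multiplicative.ofAdd (k • w)) := by
  rw [← map_zpow, ← ofAdd_zsmul]

lemma trH_mul (w u : ℚ × ℚ) :
    trH (Multiplicative.ofAdd w) * trH (Multiplicative.ofAdd u)
      = trH (Multiplicative.ofAdd (w + u)) := by
  rw [← map_mul, ← ofAdd_add]

lemma trH_inv (w : ℚ × ℚ) :
    (trH (Multiplicative.ofAdd w))⁻¹ = trH (Multiplicative.ofAdd (-w)) := by
  rw [← map_inv, ← ofAdd_neg]

lemma trH_eq_one : trH (Multiplicative.ofAdd ((0:ℚ), (0:ℚ))) = 1 := by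
  rw [show Multiplicative.ofAdd ((0:ℚ), (0:ℚ)) = 1 from rfl, map_one]

lemma sandwich_N (hdet : a*d - b*c = 1) (s w : ℚ × ℚ) :
    (trH (Multiplicative.ofAdd s) * permNQ a b c d hdet) * trH (Multiplicative.ofAdd w)
      * (trH (Multiplicative.ofAdd s) * permNQ a b c d hdet)⁻¹
      = trH (Multiplicative.ofAdd (NQfun a b c d w)) := by
  rw [mul_inv_rev, permNQ_inv hdet, trH_inv]
  calc trH (Multiplicative.ofAdd s) * permNQ a b c d hdet * trH (Multiplicative.ofAdd w)
      * (permNQ a b c d hdet * trH (Multiplicative.ofAdd (-s)))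
      = trH (Multiplicative.ofAdd s) * (permNQ a b c d hdet * trH (Multiplicative.ofAdd w))
        * permNQ a b c d hdet * trH (Multiplicative.ofAdd (-s)) := by group
    _ = trH (Multiplicative.ofAdd s) * (trH (Multiplicative.ofAdd (NQfun a b c d w))
        * permNQ a b c d hdet) * permNQ a b c d hdet * trH (Multiplicative.ofAdd (-s)) := by
        rw [permNQ_tr hdet]
    _ = trH (Multiplicative.ofAdd s) * trH (Multiplicative.ofAdd (NQfun a b c d w))
        * (permNQ a b c d hdet * permNQ a b c d hdet) * trH (Multiplicative.ofAdd (-s)) := by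
        group
    _ = trH (Multiplicative.ofAdd s) * trH (Multiplicative.ofAdd (NQfun a b c d w))
        * trH (Multiplicative.ofAdd (-s)) := by rw [permNQ_sq hdet]; group
    _ = trH (Multiplicative.ofAdd (s + NQfun a b c d w + -s)) := by rw [trH_mul, trH_mul]
    _ = trH (Multiplicative.ofAdd (NQfun a b c d w)) := by ring_nf

lemma sandwich_J (s w : ℚ × ℚ) :
    (trH (Multiplicative.ofAdd s) * permJQ) * trH (Multiplicative.ofAdd w)
      * (trH (Multiplicative.ofAdd s) * permJQ)⁻¹
      = trH (Multiplicative.ofAdd (w.1, -w.2)) := by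
  rw [mul_inv_rev, permJQ_inv, trH_inv]
  calc trH (Multiplicative.ofAdd s) * permJQ * trH (Multiplicative.ofAdd w)
      * (permJQ * trH (Multiplicative.ofAdd (-s)))
      = trH (Multiplicative.ofAdd s) * (permJQ * trH (Multiplicative.ofAdd w))
        * permJQ * trH (Multiplicative.ofAdd (-s)) := by group
    _ = trH (Multiplicative.ofAdd s) * (trH (Multiplicative.ofAdd (w.1, -w.2)) * permJQ)
        * permJQ * trH (Multiplicative.ofAdd (-s)) := by rw [permJQ_tr]
    _ = trH (Multiplicative.ofAdd s) * trH (Multiplicative.ofAdd (w.1, -w.2))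
        * (permJQ * permJQ) * trH (Multiplicative.ofAdd (-s)) := by group
    _ = trH (Multiplicative.ofAdd s) * trH (Multiplicative.ofAdd (w.1, -w.2))
        * trH (Multiplicative.ofAdd (-s)) := by rw [permJQ_sq]; group
    _ = trH (Multiplicative.ofAdd (s + (w.1, -w.2) + -s)) := by rw [trH_mul, trH_mul]
    _ = trH (Multiplicative.ofAdd ((w.1, -w.2))) := by ring_nf

lemma prodsq_N (hdet : a*d - b*c = 1) (s : ℚ × ℚ) :
    (trH (Multiplicative.ofAdd s) * permNQ a b c d hdet)
      * (trH (Multiplicative.ofAdd s) * permNQ a b c d hdet)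
      = trH (Multiplicative.ofAdd (s + NQfun a b c d s)) := by
  calc (trH (Multiplicative.ofAdd s) * permNQ a b c d hdet)
      * (trH (Multiplicative.ofAdd s) * permNQ a b c d hdet)
      = trH (Multiplicative.ofAdd s) * (permNQ a b c d hdet * trH (Multiplicative.ofAdd s))
        * permNQ a b c d hdet := by group
    _ = trH (Multiplicative.ofAdd s) * (trH (Multiplicative.ofAdd (NQfun a b c d s))
        * permNQ a b c d hdet) * permNQ a b c d hdet := by rw [permNQ_tr hdet]
    _ = trH (Multiplicative.ofAdd s) * trH (Multiplicative.ofAdd (NQfun a b c d s))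
        * (permNQ a b c d hdet * permNQ a b c d hdet) := by group
    _ = _ := by rw [permNQ_sq hdet, mul_one, trH_mul]

lemma prodsq_J (s : ℚ × ℚ) :
    (trH (Multiplicative.ofAdd s) * permJQ) * (trH (Multiplicative.ofAdd s) * permJQ)
      = trH (Multiplicative.ofAdd (s + (s.1, -s.2))) := by
  calc (trH (Multiplicative.ofAdd s) * permJQ) * (trH (Multiplicative.ofAdd s) * permJQ)
      = trH (Multiplicative.ofAdd s) * (permJQ * trH (Multiplicative.ofAdd s)) * permJQ := by
        group
    _ = trH (Multiplicative.ofAdd s) * (trH (Multiplicative.ofAdd (s.1, -s.2)) * permJQ)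
        * permJQ := by rw [permJQ_tr]
    _ = trH (Multiplicative.ofAdd s) * trH (Multiplicative.ofAdd (s.1, -s.2))
        * (permJQ * permJQ) := by group
    _ = _ := by rw [permJQ_sq, mul_one, trH_mul]

lemma Fimg_rels (hdet : a*d - b*c = 1) :
    ∀ r ∈ anosovDoubleRels a b c d, FreeGroup.lift (Fimg a b c d hdet) r = 1 := by
  have hdetQ : (a:ℚ)*d - b*c = 1 := by exact_mod_cast hdet
  have hF2sq : (Fimg a b c d hdet 2)^(2:ℤ) = trH (Multiplicative.ofAdd ((1:ℚ), (0:ℚ))) := by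
    rw [zpow_two]
    show (trH (Multiplicative.ofAdd ((1:ℚ)/2, (0:ℚ))) * permJQ)
      * (trH (Multiplicative.ofAdd ((1:ℚ)/2, (0:ℚ))) * permJQ) = _
    rw [prodsq_J]
    have hq : ((1:ℚ)/2, (0:ℚ)) + ((((1:ℚ)/2, (0:ℚ)) : ℚ × ℚ).1, -(((1:ℚ)/2, (0:ℚ)) : ℚ × ℚ).2)
        = ((1:ℚ), (0:ℚ)) := by ext <;> norm_num
    rw [hq]
  have hF2pow : ∀ k : ℤ, (Fimg a b c d hdet 2)^(2*k)
      = trH (Multiplicative.ofAdd ((k:ℚ), (0:ℚ))) := by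
    intro k
    have e1 : (Fimg a b c d hdet 2)^(2*k) = ((Fimg a b c d hdet 2)^(2:ℤ))^k := by
      rw [← zpow_mul]
    have hsm : k • ((1:ℚ), (0:ℚ)) = ((k:ℚ), (0:ℚ)) := by ext <;> simp
    rw [e1, hF2sq, trH_zpow, hsm]
  have hF3pow : ∀ k : ℤ, (Fimg a b c d hdet 3)^k
      = trH (Multiplicative.ofAdd ((0:ℚ), (k:ℚ))) := by
    intro k
    have hsm : k • ((0:ℚ), (1:ℚ)) = ((0:ℚ), (k:ℚ)) := by ext <;> simp
    show (trH (Multiplicative.ofAdd ((0:ℚ), (1:ℚ))))^k = _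
    rw [trH_zpow, hsm]
  intro r hr
  rcases hr with h | h | h | h
  · -- t1 x1 t1⁻¹ x1
    subst h
    simp only [map_mul, map_inv, FreeGroup.lift_apply_of]
    show (trH (Multiplicative.ofAdd ((a:ℚ)/2, (c:ℚ)/2)) * permNQ a b c d hdet)
        * trH (Multiplicative.ofAdd ((b:ℚ), (d:ℚ)))
        * ((trH (Multiplicative.ofAdd ((a:ℚ)/2, (c:ℚ)/2)) * permNQ a b c d hdet))⁻¹
        * trH (Multiplicative.ofAdd ((b:ℚ), (d:ℚ))) = 1
    rw [sandwich_N hdet, trH_mul]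
    have hx : NQfun a b c d ((b:ℚ), (d:ℚ)) + ((b:ℚ), (d:ℚ)) = ((0:ℚ), (0:ℚ)) := by
      unfold NQfun
      ext
      · show ((a:ℚ)*d+b*c)*b - 2*a*b*d + b = 0
        linear_combination (-(b:ℚ)) * hdetQ
      · show 2*c*d*(b:ℚ) - ((a:ℚ)*d+b*c)*d + d = 0
        linear_combination (-(d:ℚ)) * hdetQ
    rw [hx, trH_eq_one]
  · -- t2 x2 t2⁻¹ x2
    subst h
    simp only [map_mul, map_inv, FreeGroup.lift_apply_of]
    show (trH (Multiplicative.ofAdd ((1:ℚ)/2, (0:ℚ))) * permJQ)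
        * trH (Multiplicative.ofAdd ((0:ℚ), (1:ℚ)))
        * ((trH (Multiplicative.ofAdd ((1:ℚ)/2, (0:ℚ))) * permJQ))⁻¹
        * trH (Multiplicative.ofAdd ((0:ℚ), (1:ℚ))) = 1
    rw [sandwich_J, trH_mul]
    have hx : ((((0:ℚ),(1:ℚ)) : ℚ × ℚ).1, -(((0:ℚ),(1:ℚ)) : ℚ × ℚ).2) + ((0:ℚ), (1:ℚ))
        = ((0:ℚ), (0:ℚ)) := by ext <;> simp
    rw [hx, trH_eq_one]
  · -- t1⁻¹ t1⁻¹ t2^(2a) x2^c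
    subst h
    simp only [map_mul, map_inv, map_zpow, FreeGroup.lift_apply_of]
    have e0 : Fimg a b c d hdet 0 * Fimg a b c d hdet 0
        = trH (Multiplicative.ofAdd ((a:ℚ), (c:ℚ))) := by
      show (trH (Multiplicative.ofAdd ((a:ℚ)/2, (c:ℚ)/2)) * permNQ a b c d hdet)
        * (trH (Multiplicative.ofAdd ((a:ℚ)/2, (c:ℚ)/2)) * permNQ a b c d hdet) = _
      rw [prodsq_N hdet]
      have hfix : NQfun a b c d ((a:ℚ)/2, (c:ℚ)/2) = ((a:ℚ)/2, (c:ℚ)/2) := by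
        unfold NQfun
        ext
        · show ((a:ℚ)*d+b*c)*((a:ℚ)/2) - 2*a*b*((c:ℚ)/2) = (a:ℚ)/2
          linear_combination ((a:ℚ)/2) * hdetQ
        · show 2*c*d*((a:ℚ)/2) - ((a:ℚ)*d+b*c)*((c:ℚ)/2) = (c:ℚ)/2
          linear_combination ((c:ℚ)/2) * hdetQ
      rw [hfix]
      have hsum : ((a:ℚ)/2, (c:ℚ)/2) + ((a:ℚ)/2, (c:ℚ)/2) = ((a:ℚ), (c:ℚ)) := by
        ext <;> simp <;> ring
      rw [hsum]
    have h0 : (Fimg a b c d hdet 0)⁻¹ * (Fimg a b c d hdet 0)⁻¹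
        = trH (Multiplicative.ofAdd (-((a:ℚ), (c:ℚ)))) := by
      rw [← mul_inv_rev, e0, trH_inv]
    rw [h0, hF2pow a, hF3pow c, trH_mul, trH_mul]
    have hx : -((a:ℚ), (c:ℚ)) + ((a:ℚ), (0:ℚ)) + ((0:ℚ), (c:ℚ)) = ((0:ℚ), (0:ℚ)) := by
      ext <;> simp
    rw [hx, trH_eq_one]
  · -- x1⁻¹ t2^(2b) x2^d
    subst h
    simp only [map_mul, map_inv, map_zpow, FreeGroup.lift_apply_of]
    have h1 : (Fimg a b c d hdet 1)⁻¹ = trH (Multiplicative.ofAdd (-((b:ℚ), (d:ℚ)))) := by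
      show (trH (Multiplicative.ofAdd ((b:ℚ), (d:ℚ))))⁻¹ = _
      rw [trH_inv]
    rw [h1, hF2pow b, hF3pow d, trH_mul, trH_mul]
    have hx : -((b:ℚ), (d:ℚ)) + ((b:ℚ), (0:ℚ)) + ((0:ℚ), (d:ℚ)) = ((0:ℚ), (0:ℚ)) := by
      ext <;> simp
    rw [hx, trH_eq_one]

/-- the homomorphism to the model -/
def fmod (a b c d : ℤ) (hdet : a*d - b*c = 1) : P a b c d →* Equiv.Perm (ℚ × ℚ) :=
  PresentedGroup.toGroup (Fimg_rels hdet)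

end AnosovPf
namespace AnosovPf

variable {a b c d : ℤ}

def eta (a b c d : ℤ) : ℤ × ℤ := (a + (a*d+b*c), c + 2*c*d)

lemma X2_eq_iH : (X2 : P a b c d) = iH (0, 1) := by simp [iH]

lemma T1inv : (T1 : P a b c d)⁻¹ = iH (-(a, c)) * T1 := by
  rw [iH_inv, ← T1sq]
  group

lemma eta_eq (hdet : a*d - b*c = 1) :
    eta a b c d = (a, c) + ((MZ a b c d hdet)⁻¹ (1, 0)) := by
  rw [MZ_inv_apply hdet]
  unfold eta Nv Jv
  ext <;> simp

lemma T1T2 (hdet : a*d - b*c = 1) :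
    (T1 : P a b c d) * T2 = iH (eta a b c d) * Zel⁻¹ := by
  have he1 : (iH ((1,0) : ℤ × ℤ) : P a b c d) = T2^(2:ℤ) := by simp [iH]
  have h1 : (iH (-(1,0)) : P a b c d) * Zel = T2⁻¹ * T1 := by
    rw [iH_inv, he1]
    unfold Zel
    group
  have h2 : (T1 : P a b c d) * T2 = iH (a,c) * (iH (-(1,0)) * Zel)⁻¹ := by
    rw [h1, ← T1sq]
    group
  rw [h2, mul_inv_rev, ← iH_inv, neg_neg]
  calc (iH ((a,c) : ℤ×ℤ) : P a b c d) * (Zel⁻¹ * iH (1,0))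
      = iH (a,c) * (iH ((MZ a b c d hdet)⁻¹ (1,0)) * Zel⁻¹) := by rw [conjZmInv hdet]
    _ = (iH (a,c) * iH ((MZ a b c d hdet)⁻¹ (1,0))) * Zel⁻¹ := by group
    _ = iH (eta a b c d) * Zel⁻¹ := by rw [← iH_add, ← eta_eq hdet]

lemma T1Z (hdet : a*d - b*c = 1) :
    (T1 : P a b c d) * Zel * T1⁻¹ = iH (eta a b c d) * Zel⁻¹ := by
  have : (T1 : P a b c d) * Zel * T1⁻¹ = T1 * T2 := by
    unfold Zel; group
  rw [this, T1T2 hdet]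

lemma powZinv_nf (hdet : a*d - b*c = 1) :
    ∀ l : ℤ, ∃ w, ((iH (eta a b c d) : P a b c d) * Zel⁻¹)^l = iH w * Zel^(-l) := by
  intro l
  induction l using Int.induction_on with
  | zero => exact ⟨0, by simp [iH_zero]⟩
  | succ n ih =>
    obtain ⟨w, hw⟩ := ih
    refine ⟨w + (MZ a b c d hdet ^ (-(n:ℤ))) (eta a b c d), ?_⟩
    have e1 : ((iH (eta a b c d) : P a b c d) * Zel⁻¹)^((n:ℤ)+1)
        = ((iH (eta a b c d) : P a b c d) * Zel⁻¹)^(n:ℤ) * (iH (eta a b c d) * Zel⁻¹) :=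
      zpow_add_one _ _
    rw [e1, hw]
    calc (iH w : P a b c d) * Zel^(-(n:ℤ)) * (iH (eta a b c d) * Zel⁻¹)
        = iH w * (Zel^(-(n:ℤ)) * iH (eta a b c d)) * Zel⁻¹ := by group
      _ = iH w * (iH ((MZ a b c d hdet ^ (-(n:ℤ))) (eta a b c d)) * Zel^(-(n:ℤ))) * Zel⁻¹ := by
          rw [conjZpow hdet]
      _ = (iH w * iH ((MZ a b c d hdet ^ (-(n:ℤ))) (eta a b c d))) * (Zel^(-(n:ℤ)) * Zel⁻¹) := by
          group
      _ = iH (w + (MZ a b c d hdet ^ (-(n:ℤ))) (eta a b c d)) * Zel^(-((n:ℤ)+1)) := by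
          rw [← iH_add]
          congr 1
          rw [← zpow_sub_one]
          congr 1
          ring
  | pred n ih =>
    obtain ⟨w, hw⟩ := ih
    refine ⟨w + (MZ a b c d hdet ^ ((n:ℤ)+1)) (-eta a b c d), ?_⟩
    have e1 : ((iH (eta a b c d) : P a b c d) * Zel⁻¹)^(-(n:ℤ)-1)
        = ((iH (eta a b c d) : P a b c d) * Zel⁻¹)^(-(n:ℤ)) * (iH (eta a b c d) * Zel⁻¹)⁻¹ :=
      zpow_sub_one _ _
    have e2 : ((iH (eta a b c d) : P a b c d) * Zel⁻¹)⁻¹ = Zel * iH (-eta a b c d) := by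
      rw [iH_inv]; group
    rw [e1, hw, e2, neg_neg]
    calc (iH w : P a b c d) * Zel^((n:ℤ)) * (Zel * iH (-eta a b c d))
        = iH w * (Zel^((n:ℤ)+1) * iH (-eta a b c d)) := by group
      _ = iH w * (iH ((MZ a b c d hdet ^ ((n:ℤ)+1)) (-eta a b c d)) * Zel^((n:ℤ)+1)) := by
          rw [conjZpow hdet]
      _ = (iH w * iH ((MZ a b c d hdet ^ ((n:ℤ)+1)) (-eta a b c d))) * Zel^((n:ℤ)+1) := by
          group
      _ = iH (w + (MZ a b c d hdet ^ ((n:ℤ)+1)) (-eta a b c d)) * Zel^(-(-(n:ℤ)-1)) := by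
          rw [← iH_add]; group

end AnosovPf
namespace AnosovPf

variable {a b c d : ℤ}

lemma T1Zpow (hdet : a*d - b*c = 1) (l : ℤ) :
    ∃ w, (T1 : P a b c d) * Zel^l * T1⁻¹ = iH w * Zel^(-l) := by
  obtain ⟨w, hw⟩ := powZinv_nf (a := a) (b := b) (c := c) (d := d) hdet l
  exact ⟨w, by rw [← conj_zpow, T1Z hdet, hw]⟩

lemma form_mul_form (hdet : a*d - b*c = 1) (v w : ℤ × ℤ) (k l : ℤ) :
    ((iH v : P a b c d) * Zel^k) * (iH w * Zel^l)
      = iH (v + (MZ a b c d hdet ^ k) w) * Zel^(k+l) := by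
  calc ((iH v : P a b c d) * Zel^k) * (iH w * Zel^l)
      = iH v * (Zel^k * iH w) * Zel^l := by group
    _ = iH v * (iH ((MZ a b c d hdet ^ k) w) * Zel^k) * Zel^l := by rw [conjZpow hdet]
    _ = (iH v * iH ((MZ a b c d hdet ^ k) w)) * (Zel^k * Zel^l) := by group
    _ = _ := by rw [← iH_add, ← zpow_add]

lemma formA_mul (v w : ℤ × ℤ) (k : ℤ) :
    (iH v : P a b c d) * (iH w * Zel^k) = iH (v + w) * Zel^k := by
  rw [← mul_assoc, ← iH_add]

lemma T1_mul_form (hdet : a*d - b*c = 1) (w : ℤ × ℤ) (l : ℤ) :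
    ∃ u, (T1 : P a b c d) * (iH w * Zel^l) = iH u * Zel^(-l) * T1 := by
  obtain ⟨u', hu⟩ := T1Zpow (a := a) (b := b) (c := c) (d := d) hdet l
  refine ⟨Nv a b c d w + u', ?_⟩
  calc (T1 : P a b c d) * (iH w * Zel^l)
      = (T1 * iH w) * Zel^l := by group
    _ = (iH (Nv a b c d w) * T1) * Zel^l := by rw [conjT1m hdet]
    _ = iH (Nv a b c d w) * (T1 * Zel^l * T1⁻¹) * T1 := by group
    _ = iH (Nv a b c d w) * (iH u' * Zel^(-l)) * T1 := by rw [hu]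
    _ = (iH (Nv a b c d w) * iH u') * Zel^(-l) * T1 := by group
    _ = _ := by rw [← iH_add]

def isNF (g : P a b c d) : Prop :=
  (∃ (v : ℤ × ℤ) (k : ℤ), g = (iH v : P a b c d) * Zel^k)
    ∨ (∃ (v : ℤ × ℤ) (k : ℤ), g = (iH v : P a b c d) * Zel^k * T1)

lemma nf_one : isNF (1 : P a b c d) :=
  Or.inl ⟨0, 0, by simp [iH_zero]⟩

lemma nf_mul (hdet : a*d - b*c = 1) {x y : P a b c d} (hx : isNF x) (hy : isNF y) :
    isNF (x * y) := by
  rcases hx with ⟨v, k, rfl⟩ | ⟨v, k, rfl⟩ <;> rcases hy with ⟨w, l, rfl⟩ | ⟨w, l, rfl⟩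
  · exact Or.inl ⟨_, _, form_mul_form hdet v w k l⟩
  · refine Or.inr ⟨v + (MZ a b c d hdet ^ k) w, k + l, ?_⟩
    calc (iH v * Zel^k : P a b c d) * (iH w * Zel^l * T1)
        = ((iH v * Zel^k) * (iH w * Zel^l)) * T1 := by group
      _ = _ := by rw [form_mul_form hdet]
  · obtain ⟨u, hu⟩ := T1_mul_form (a := a) (b := b) (c := c) (d := d) hdet w l
    refine Or.inr ⟨v + (MZ a b c d hdet ^ k) u, k + (-l), ?_⟩
    calc (iH v * Zel^k * T1 : P a b c d) * (iH w * Zel^l)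
        = (iH v * Zel^k) * (T1 * (iH w * Zel^l)) := by group
      _ = (iH v * Zel^k) * (iH u * Zel^(-l) * T1) := by rw [hu]
      _ = ((iH v * Zel^k) * (iH u * Zel^(-l))) * T1 := by group
      _ = _ := by rw [form_mul_form hdet]
  · obtain ⟨u, hu⟩ := T1_mul_form (a := a) (b := b) (c := c) (d := d) hdet w l
    refine Or.inl ⟨(v + (MZ a b c d hdet ^ k) u) + (MZ a b c d hdet ^ (k + -l)) (a, c),
      (k + -l) + 0, ?_⟩
    calc (iH v * Zel^k * T1 : P a b c d) * (iH w * Zel^l * T1)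
        = (iH v * Zel^k) * (T1 * (iH w * Zel^l)) * T1 := by group
      _ = (iH v * Zel^k) * (iH u * Zel^(-l) * T1) * T1 := by rw [hu]
      _ = ((iH v * Zel^k) * (iH u * Zel^(-l))) * (T1 * T1) := by group
      _ = (iH (v + (MZ a b c d hdet ^ k) u) * Zel^(k + -l)) * (iH (a,c) * Zel^(0:ℤ)) := by
          rw [form_mul_form hdet, T1sq]
          group
      _ = _ := by rw [form_mul_form hdet]

lemma nf_inv (hdet : a*d - b*c = 1) {x : P a b c d} (hx : isNF x) : isNF x⁻¹ := by
  have invA : ∀ (v : ℤ × ℤ) (k : ℤ),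
      ((iH v : P a b c d) * Zel^k)⁻¹ = iH ((MZ a b c d hdet ^ (-k)) (-v)) * Zel^(-k) := by
    intro v k
    calc ((iH v : P a b c d) * Zel^k)⁻¹ = Zel^(-k) * iH (-v) := by
          rw [iH_inv]; group
      _ = iH ((MZ a b c d hdet ^ (-k)) (-v)) * Zel^(-k) := by rw [conjZpow hdet]
  rcases hx with ⟨v, k, rfl⟩ | ⟨v, k, rfl⟩
  · exact Or.inl ⟨_, _, invA v k⟩
  · obtain ⟨u, hu⟩ := T1_mul_form (a := a) (b := b) (c := c) (d := d) hdet
      ((MZ a b c d hdet ^ (-k)) (-v)) (-k)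
    refine Or.inr ⟨-(a,c) + u, k, ?_⟩
    calc ((iH v : P a b c d) * Zel^k * T1)⁻¹
        = T1⁻¹ * (iH v * Zel^k)⁻¹ := by group
      _ = (iH (-(a,c)) * T1) * (iH ((MZ a b c d hdet ^ (-k)) (-v)) * Zel^(-k)) := by
          rw [T1inv, invA]
      _ = iH (-(a,c)) * (T1 * (iH ((MZ a b c d hdet ^ (-k)) (-v)) * Zel^(-k))) := by group
      _ = iH (-(a,c)) * (iH u * Zel^(-(-k)) * T1) := by rw [hu]
      _ = (iH (-(a,c)) * (iH u * Zel^(k))) * T1 := by rw [neg_neg]; group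
      _ = _ := by rw [formA_mul]

def nfS (a b c d : ℤ) (hdet : a*d - b*c = 1) : Subgroup (P a b c d) where
  carrier := {g | isNF g}
  one_mem' := nf_one
  mul_mem' hx hy := nf_mul hdet hx hy
  inv_mem' hx := nf_inv hdet hx

lemma nf_exists (hdet : a*d - b*c = 1) (g : P a b c d) : isNF g := by
  refine PresentedGroup.generated_by _ (nfS a b c d hdet) ?_ g
  intro j
  fin_cases j
  · exact Or.inr ⟨0, 0, by simp [iH_zero]; rfl⟩
  · refine Or.inl ⟨(b, d), 0, ?_⟩
    show (X1 : P a b c d) = iH (b, d) * Zel^(0:ℤ)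
    rw [X1_eq]; simp
  · refine Or.inr ⟨MZ a b c d hdet (-(a,c)), 1, ?_⟩
    show (T2 : P a b c d) = _
    rw [zpow_one]
    calc (T2 : P a b c d) = Zel * T1⁻¹ := by unfold Zel; group
      _ = Zel * (iH (-(a,c)) * T1) := by rw [T1inv]
      _ = (Zel * iH (-(a,c))) * T1 := by group
      _ = (iH (MZ a b c d hdet (-(a,c))) * Zel) * T1 := by rw [conjZm hdet]
  · refine Or.inl ⟨(0, 1), 0, ?_⟩
    show (X2 : P a b c d) = iH (0, 1) * Zel^(0:ℤ)
    rw [X2_eq_iH]; simp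

end AnosovPf
namespace AnosovPf

variable {a b c d : ℤ}

lemma F2sq (hdet : a*d - b*c = 1) :
    (Fimg a b c d hdet 2)^(2:ℤ) = trH (Multiplicative.ofAdd ((1:ℚ), (0:ℚ))) := by
  rw [zpow_two]
  show (trH (Multiplicative.ofAdd ((1:ℚ)/2, (0:ℚ))) * permJQ)
    * (trH (Multiplicative.ofAdd ((1:ℚ)/2, (0:ℚ))) * permJQ) = _
  rw [prodsq_J]
  have hq : ((1:ℚ)/2, (0:ℚ)) + ((((1:ℚ)/2, (0:ℚ)) : ℚ × ℚ).1, -(((1:ℚ)/2, (0:ℚ)) : ℚ × ℚ).2)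
      = ((1:ℚ), (0:ℚ)) := by ext <;> norm_num
  rw [hq]

lemma fmod_iH (hdet : a*d - b*c = 1) (v : ℤ × ℤ) :
    fmod a b c d hdet (iH v) = trH (Multiplicative.ofAdd (((v.1:ℚ), (v.2:ℚ)) : ℚ × ℚ)) := by
  have hT2 : fmod a b c d hdet (T2 : P a b c d) = Fimg a b c d hdet 2 :=
    PresentedGroup.toGroup.of _
  have hX2 : fmod a b c d hdet (X2 : P a b c d) = Fimg a b c d hdet 3 :=
    PresentedGroup.toGroup.of _
  unfold iH
  simp only [map_mul, map_zpow]
  rw [hT2, hX2, F2sq hdet]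
  show (trH (Multiplicative.ofAdd ((1:ℚ), (0:ℚ))))^v.1
      * (trH (Multiplicative.ofAdd ((0:ℚ), (1:ℚ))))^v.2 = _
  rw [trH_zpow, trH_zpow, trH_mul]
  congr 2
  ext <;> simp

lemma iH_inj (hdet : a*d - b*c = 1) {u v : ℤ × ℤ}
    (h : (iH u : P a b c d) = iH v) : u = v := by
  have h2 := congrArg (fmod a b c d hdet) h
  rw [fmod_iH hdet, fmod_iH hdet] at h2
  have h3 := congrArg (fun σ : Equiv.Perm (ℚ × ℚ) => σ ((0:ℚ), (0:ℚ))) h2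
  simp only [trH_apply, Prod.mk_add_mk, zero_add] at h3
  have h4 : ((u.1 : ℚ), (u.2 : ℚ)) = ((v.1 : ℚ), (v.2 : ℚ)) := h3
  have hu1 : (u.1 : ℚ) = (v.1 : ℚ) := congrArg Prod.fst h4
  have hu2 : (u.2 : ℚ) = (v.2 : ℚ) := congrArg Prod.snd h4
  have : u.1 = v.1 := by exact_mod_cast hu1
  have : u.2 = v.2 := by exact_mod_cast hu2
  ext <;> assumption

lemma conj_iH_mem (hdet : a*d - b*c = 1) (g : P a b c d) (v : ℤ × ℤ) :
    ∃ w, g * iH v * g⁻¹ = (iH w : P a b c d) := by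
  rcases nf_exists (a := a) (b := b) (c := c) (d := d) hdet g with ⟨u, k, rfl⟩ | ⟨u, k, rfl⟩
  · refine ⟨u + (MZ a b c d hdet ^ k) v + -u, ?_⟩
    calc (iH u * Zel^k : P a b c d) * iH v * (iH u * Zel^k)⁻¹
        = iH u * (Zel^k * iH v * (Zel^k)⁻¹) * iH (-u) := by rw [iH_inv]; group
      _ = iH u * iH ((MZ a b c d hdet ^ k) v) * iH (-u) := by rw [conjZpow' hdet]
      _ = _ := by rw [← iH_add, ← iH_add]
  · refine ⟨u + (MZ a b c d hdet ^ k) (Nv a b c d v) + -u, ?_⟩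
    calc (iH u * Zel^k * T1 : P a b c d) * iH v * (iH u * Zel^k * T1)⁻¹
        = iH u * (Zel^k * (T1 * iH v * T1⁻¹) * (Zel^k)⁻¹) * iH (-u) := by rw [iH_inv]; group
      _ = iH u * (Zel^k * iH (Nv a b c d v) * (Zel^k)⁻¹) * iH (-u) := by rw [conjT1 hdet]
      _ = iH u * iH ((MZ a b c d hdet ^ k) (Nv a b c d v)) * iH (-u) := by rw [conjZpow' hdet]
      _ = _ := by rw [← iH_add, ← iH_add]

lemma iH_0m (m : ℤ) : (iH (0, m) : P a b c d) = X2 ^ m := by simp [iH]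

/-- pinning down ψ(x₂) for a class-preserving automorphism fixing t₂ -/
lemma psiX2 (hdet : a*d - b*c = 1) (ψ : P a b c d ≃* P a b c d)
    (hcp : ∀ g, IsConj g (ψ g)) (ht2 : ψ T2 = T2) :
    ∃ m : ℤ, ψ X2 = iH (0, m) := by
  obtain ⟨g, hg⟩ := isConj_iff.mp (hcp X2)
  obtain ⟨w, hw⟩ := conj_iH_mem (a := a) (b := b) (c := c) (d := d) hdet g (0, 1)
  have hw' : g * X2 * g⁻¹ = (iH w : P a b c d) := by rw [X2_eq_iH]; exact hw
  have hX2w : ψ X2 = iH w := by rw [← hg]; exact hw' 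
  have hconstr : ψ ((T2 : P a b c d) * X2 * T2⁻¹) = (ψ X2)⁻¹ := by
    rw [t2x2, map_inv]
  rw [map_mul, map_mul, map_inv, ht2, hX2w] at hconstr
  rw [conjT2] at hconstr
  rw [← iH_inv] at hconstr
  have hJw := iH_inj hdet hconstr
  have h1 : w.1 = 0 := by
    have := congrArg Prod.fst hJw
    simp [Jv] at this
    omega
  refine ⟨w.2, ?_⟩
  rw [hX2w]
  congr 1
  ext
  · exact h1.symm ▸ rfl
  · rfl

end AnosovPf
namespace AnosovPf

variable {a b c d : ℤ}

lemma b_ne_zero (hdet : a*d - b*c = 1) (htr : 2 < |a + d|) : b ≠ 0 := by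
  intro hb
  rw [hb] at hdet
  simp at hdet
  rcases Int.mul_eq_one_iff_eq_one_or_neg_one.mp hdet with ⟨ha, hd⟩ | ⟨ha, hd⟩ <;>
    rw [ha, hd] at htr <;> norm_num at htr

lemma main_fix (hdet : a*d - b*c = 1) (htr : 2 < |a + d|)
    (ψ : P a b c d ≃* P a b c d) (hcp : ∀ g, IsConj g (ψ g))
    (ht2 : ψ T2 = T2) (hH : ∀ v, ψ (iH v) = iH v) :
    ∃ q : ℤ, ∀ g, ψ g = iH (q, 0) * g * (iH (q, 0))⁻¹ := by
  -- conjugator for T1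
  obtain ⟨g, hg⟩ := isConj_iff.mp (hcp T1)
  have hE : ∃ (h : ℤ × ℤ) (k : ℤ), ψ T1 = (iH h : P a b c d) * (Zel^k * T1 * (Zel^k)⁻¹) * iH (-h) := by
    rcases nf_exists (a := a) (b := b) (c := c) (d := d) hdet g with ⟨u, k, rfl⟩ | ⟨u, k, rfl⟩
    · exact ⟨u, k, by rw [← hg]; simp only [iH_inv]; group⟩
    · exact ⟨u, k, by rw [← hg]; simp only [iH_inv]; group⟩
  obtain ⟨h, k, hET1⟩ := hE
  -- the action of ψ(T1) on H, two ways
  have hact : ∀ v, ψ T1 * iH v * (ψ T1)⁻¹ = (iH (Nv a b c d v) : P a b c d) := by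
    intro v
    calc ψ T1 * iH v * (ψ T1)⁻¹ = ψ (T1 * iH v * T1⁻¹) := by
          rw [map_mul, map_mul, map_inv, hH v]
      _ = ψ (iH (Nv a b c d v)) := by rw [conjT1 hdet]
      _ = iH (Nv a b c d v) := hH _
  have hQconj : ∀ w, (Zel^k * T1 * (Zel^k)⁻¹ : P a b c d) * iH w * (Zel^k * T1 * (Zel^k)⁻¹)⁻¹
      = iH ((MZ a b c d hdet ^ k) (Nv a b c d ((MZ a b c d hdet ^ (-k)) w))) := by
    intro w
    calc (Zel^k * T1 * (Zel^k)⁻¹ : P a b c d) * iH w * (Zel^k * T1 * (Zel^k)⁻¹)⁻¹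
        = Zel^k * (T1 * (Zel^(-k) * iH w * (Zel^(-k))⁻¹) * T1⁻¹) * (Zel^k)⁻¹ := by
          rw [zpow_neg]; group
      _ = Zel^k * (T1 * iH ((MZ a b c d hdet ^ (-k)) w) * T1⁻¹) * (Zel^k)⁻¹ := by
          rw [conjZpow' hdet]
      _ = Zel^k * iH (Nv a b c d ((MZ a b c d hdet ^ (-k)) w)) * (Zel^k)⁻¹ := by
          rw [conjT1 hdet]
      _ = _ := by rw [conjZpow' hdet]
  have hact2 : ∀ v, ψ T1 * iH v * (ψ T1)⁻¹
      = iH ((MZ a b c d hdet ^ k) (Nv a b c d ((MZ a b c d hdet ^ (-k)) v))) := by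
    intro v
    have hmid : (iH (-h) : P a b c d) * iH v * iH h = iH v := by
      rw [← iH_add, ← iH_add]
      congr 1
      abel
    calc ψ T1 * iH v * (ψ T1)⁻¹
        = iH h * ((Zel^k * T1 * (Zel^k)⁻¹) * (iH (-h) * iH v * iH h)
            * (Zel^k * T1 * (Zel^k)⁻¹)⁻¹) * iH (-h) := by
          rw [hET1]; simp only [iH_inv]; group
      _ = iH h * ((Zel^k * T1 * (Zel^k)⁻¹) * iH v * (Zel^k * T1 * (Zel^k)⁻¹)⁻¹) * iH (-h) := by
          rw [hmid]
      _ = iH h * iH ((MZ a b c d hdet ^ k) (Nv a b c d ((MZ a b c d hdet ^ (-k)) v))) * iH (-h) := by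
          rw [hQconj]
      _ = _ := by
          rw [← iH_add, ← iH_add]
          congr 1
          abel
  have hP : ∀ v, Nv a b c d v
      = (MZ a b c d hdet ^ k) (Nv a b c d ((MZ a b c d hdet ^ (-k)) v)) := by
    intro v
    exact iH_inj hdet ((hact v).symm.trans (hact2 v))
  -- deduce k = 0
  have hcomm : (MZ a b c d hdet)^k * NA a b c d hdet = NA a b c d hdet * (MZ a b c d hdet)^k := by
    apply AddEquiv.ext
    intro v
    show (MZ a b c d hdet ^ k) (NA a b c d hdet v) = NA a b c d hdet ((MZ a b c d hdet ^ k) v)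
    rw [NA_apply, NA_apply]
    have hback : (MZ a b c d hdet ^ (-k)) ((MZ a b c d hdet ^ k) v) = v := by
      rw [zpow_neg]
      exact (MZ a b c d hdet ^ k).symm_apply_apply v
    rw [hP ((MZ a b c d hdet ^ k) v), hback]
  have hk0 : k = 0 := comm_imp_zero hdet htr k hcomm
  subst hk0
  -- so ψ(T1) = iH r * T1
  set r : ℤ × ℤ := h + Nv a b c d (-h) with hr
  have hψT1 : ψ T1 = iH r * T1 := by
    rw [hET1]
    calc (iH h : P a b c d) * (Zel^(0:ℤ) * T1 * (Zel^(0:ℤ))⁻¹) * iH (-h)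
        = iH h * (T1 * iH (-h) * T1⁻¹) * T1 := by group
      _ = iH h * iH (Nv a b c d (-h)) * T1 := by rw [conjT1 hdet]
      _ = iH r * T1 := by rw [← iH_add, hr]
  -- action on Z
  have hψZ : ψ Zel = iH (Jv r) * Zel := by
    have : ψ Zel = ψ T2 * ψ T1 := by rw [← map_mul]; rfl
    rw [this, ht2, hψT1]
    calc (T2 : P a b c d) * (iH r * T1) = (T2 * iH r) * T1 := by group
      _ = (iH (Jv r) * T2) * T1 := by rw [conjT2m]
      _ = iH (Jv r) * Zel := by unfold Zel; group
  -- conjugator for Z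
  obtain ⟨g', hg'⟩ := isConj_iff.mp (hcp Zel)
  have hkey : ∃ u : ℤ × ℤ, Jv r = u + MZ a b c d hdet (-u) := by
    rcases nf_exists (a := a) (b := b) (c := c) (d := d) hdet g' with ⟨u, k', rfl⟩ | ⟨u, k', rfl⟩
    · refine ⟨u, ?_⟩
      have hval : (iH u * Zel^k' : P a b c d) * Zel * (iH u * Zel^k')⁻¹
          = iH (u + MZ a b c d hdet (-u)) * Zel := by
        calc (iH u * Zel^k' : P a b c d) * Zel * (iH u * Zel^k')⁻¹
            = iH u * (Zel * iH (-u)) := by simp only [iH_inv]; group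
          _ = iH u * (iH (MZ a b c d hdet (-u)) * Zel) := by rw [conjZm hdet]
          _ = (iH u * iH (MZ a b c d hdet (-u))) * Zel := by group
          _ = _ := by rw [← iH_add]
      have := hg'.trans hψZ
      rw [hval] at this
      exact (iH_inj hdet (mul_right_cancel this)).symm
    · -- reflection case: contradiction
      exfalso
      have hval : (iH u * Zel^k' * T1 : P a b c d) * Zel * (iH u * Zel^k' * T1)⁻¹
          = iH (u + (MZ a b c d hdet ^ k') (eta a b c d) + (MZ a b c d hdet)⁻¹ (-u)) * Zel⁻¹ := by
        calc (iH u * Zel^k' * T1 : P a b c d) * Zel * (iH u * Zel^k' * T1)⁻¹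
            = iH u * (Zel^k' * (T1 * Zel * T1⁻¹) * (Zel^k')⁻¹) * iH (-u) := by
              simp only [iH_inv]; group
          _ = iH u * (Zel^k' * (iH (eta a b c d) * Zel⁻¹) * (Zel^k')⁻¹) * iH (-u) := by
              rw [T1Z hdet]
          _ = iH u * (Zel^k' * iH (eta a b c d) * (Zel^k')⁻¹) * (Zel⁻¹ * iH (-u)) := by group
          _ = iH u * iH ((MZ a b c d hdet ^ k') (eta a b c d))
              * (iH ((MZ a b c d hdet)⁻¹ (-u)) * Zel⁻¹) := by
              rw [conjZpow' hdet, conjZmInv hdet]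
          _ = (iH u * iH ((MZ a b c d hdet ^ k') (eta a b c d))
              * iH ((MZ a b c d hdet)⁻¹ (-u))) * Zel⁻¹ := by group
          _ = _ := by rw [← iH_add, ← iH_add]
      have heq := (hg'.trans hψZ).symm.trans hval
      -- iH (Jv r) * Zel = iH β * Zel⁻¹  ⇒  Zel^2 ∈ iH-image ⇒ MZ² = 1, contradiction
      set β := u + (MZ a b c d hdet ^ k') (eta a b c d) + (MZ a b c d hdet)⁻¹ (-u) with hβ
      have hz2 : (Zel : P a b c d) * Zel = iH (-(Jv r) + β) := by
        have h1 : (Zel : P a b c d) = (iH (Jv r))⁻¹ * iH β * Zel⁻¹ := by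
          calc (Zel : P a b c d) = (iH (Jv r))⁻¹ * (iH (Jv r) * Zel) := by group
            _ = (iH (Jv r))⁻¹ * (iH β * Zel⁻¹) := by rw [heq]
            _ = _ := by group
        calc (Zel : P a b c d) * Zel = ((iH (Jv r))⁻¹ * iH β * Zel⁻¹) * Zel := by
              nth_rewrite 1 [h1]; rfl
          _ = (iH (Jv r))⁻¹ * iH β := by group
          _ = _ := by rw [← iH_inv, ← iH_add]
      have hMZ2 : ∀ v, (MZ a b c d hdet ^ (2:ℤ)) v = v := by
        intro v
        have e1 : (Zel : P a b c d)^(2:ℤ) * iH v * ((Zel : P a b c d)^(2:ℤ))⁻¹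
            = iH ((MZ a b c d hdet ^ (2:ℤ)) v) := conjZpow' hdet 2 v
        have e2 : (Zel : P a b c d)^(2:ℤ) = iH (-(Jv r) + β) := by
          rw [zpow_two]; exact hz2
        rw [e2] at e1
        have e3 : (iH (-(Jv r) + β) : P a b c d) * iH v * (iH (-(Jv r) + β))⁻¹ = iH v := by
          rw [← iH_inv, ← iH_add, ← iH_add]
          congr 1
          abel
        exact iH_inj hdet (e1.symm.trans e3)
      have : (2:ℤ) = 0 := by
        apply MZzpow_eq_one hdet htr
        exact AddEquiv.ext hMZ2
      omega
  obtain ⟨u, hu⟩ := hkey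
  -- coordinate equations
  have hrcoord : r = (-2*b*(c*h.1 - a*h.2), -2*d*(c*h.1 - a*h.2)) := by
    rw [hr]
    unfold Nv
    ext
    · show h.1 + ((a*d+b*c)*(-h).1 - 2*a*b*(-h).2) = -2*b*(c*h.1 - a*h.2)
      show h.1 + ((a*d+b*c)*(-h.1) - 2*a*b*(-h.2)) = -2*b*(c*h.1 - a*h.2)
      linear_combination (-h.1) * hdet
    · show h.2 + (2*c*d*(-h).1 - (a*d+b*c)*(-h).2) = -2*d*(c*h.1 - a*h.2)
      show h.2 + (2*c*d*(-h.1) - (a*d+b*c)*(-h.2)) = -2*d*(c*h.1 - a*h.2)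
      linear_combination (-h.2) * hdet
  set p : ℤ := c*h.1 - a*h.2 with hp
  have hucoord : u + MZ a b c d hdet (-u) = (2*b*(a*u.2 - c*u.1), 2*c*(d*u.1 - b*u.2)) := by
    rw [MZc hdet]
    ext
    · show u.1 + ((a*d+b*c)*(-u).1 - 2*a*b*(-u).2) = 2*b*(a*u.2 - c*u.1)
      show u.1 + ((a*d+b*c)*(-u.1) - 2*a*b*(-u.2)) = 2*b*(a*u.2 - c*u.1)
      linear_combination (-u.1) * hdet
    · show u.2 + ((a*d+b*c)*(-u).2 - 2*c*d*(-u).1) = 2*c*(d*u.1 - b*u.2)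
      show u.2 + ((a*d+b*c)*(-u.2) - 2*c*d*(-u.1)) = 2*c*(d*u.1 - b*u.2)
      linear_combination (-u.2) * hdet
  have hJr : Jv r = (-2*b*p, 2*d*p) := by
    rw [hrcoord]
    unfold Jv
    ext <;> simp [hp] <;> ring
  rw [hJr, hucoord] at hu
  have heq1 : -2*b*p = 2*b*(a*u.2 - c*u.1) := congrArg Prod.fst hu
  have heq2 : 2*d*p = 2*c*(d*u.1 - b*u.2) := congrArg Prod.snd hu
  -- c ∣ p
  have hcop : IsCoprime c d := ⟨-b, a, by linear_combination hdet⟩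
  have hdvd : c ∣ p := by
    have h1 : c ∣ d * p := ⟨d*u.1 - b*u.2, by linarith⟩
    exact hcop.dvd_of_dvd_mul_left h1
  obtain ⟨q, hq⟩ := hdvd
  refine ⟨q, ?_⟩
  -- conclude: ψ equals conjugation by iH (q, 0)
  have hrq : r = (q, 0) + Nv a b c d (-(q, 0)) := by
    rw [hrcoord]
    unfold Nv
    ext
    · show -2*b*p = q + ((a*d+b*c)*(-(q,0)).1 - 2*a*b*(-(q,0)).2)
      show -2*b*p = q + ((a*d+b*c)*(-q) - 2*a*b*(-0))
      rw [hq]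
      linear_combination q * hdet
    · show -2*d*p = 0 + (2*c*d*(-(q,0)).1 - (a*d+b*c)*(-(q,0)).2)
      show -2*d*p = 0 + (2*c*d*(-q) - (a*d+b*c)*(-0))
      rw [hq]
      ring
  have hgen : ∀ i : Fin 4, ψ (PresentedGroup.of i)
      = iH (q, 0) * (PresentedGroup.of i) * (iH (q, 0))⁻¹ := by
    intro i
    fin_cases i
    · show ψ T1 = iH (q, 0) * T1 * (iH (q, 0))⁻¹
      rw [hψT1, ← iH_inv]
      calc (iH r : P a b c d) * T1 = iH ((q,0) + Nv a b c d (-(q,0))) * T1 := by rw [← hrq]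
        _ = iH (q,0) * (iH (Nv a b c d (-(q,0))) * T1) := by rw [iH_add]; group
        _ = iH (q,0) * (T1 * iH (-(q,0))) := by rw [← conjT1m hdet]
        _ = iH (q, 0) * T1 * iH (-(q, 0)) := by group
    · show ψ X1 = iH (q, 0) * X1 * (iH (q, 0))⁻¹
      rw [X1_eq, hH, ← iH_inv, ← iH_add, ← iH_add]
      congr 1
      abel
    · show ψ T2 = iH (q, 0) * T2 * (iH (q, 0))⁻¹
      rw [ht2, ← iH_inv]
      calc (T2 : P a b c d) = iH ((q,0) + Jv (-(q,0))) * T2 := by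
            rw [show ((q,0) : ℤ×ℤ) + Jv (-(q,0)) = 0 from by unfold Jv; ext <;> simp,
              iH_zero, one_mul]
        _ = iH (q,0) * (iH (Jv (-(q,0))) * T2) := by rw [iH_add]; group
        _ = iH (q,0) * (T2 * iH (-(q,0))) := by rw [← conjT2m]
        _ = _ := by group
    · show ψ X2 = iH (q, 0) * X2 * (iH (q, 0))⁻¹
      rw [X2_eq_iH, hH, ← iH_inv, ← iH_add, ← iH_add]
      congr 1
      abel
  -- extend to all of P
  intro g
  have hhom : ψ.toMonoidHom = (MulAut.conj (iH (q, 0) : P a b c d)).toMonoidHom := by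
    apply PresentedGroup.ext
    intro i
    exact hgen i
  have := DFunLike.congr_fun hhom g
  exact this
end AnosovPf
namespace AnosovPf

variable {a b c d : ℤ}

lemma fixH (ψ : P a b c d ≃* P a b c d) (ht2 : ψ T2 = T2) (hx2 : ψ X2 = X2) :
    ∀ v, ψ (iH v) = iH v := by
  intro v
  unfold iH
  simp only [map_mul, map_zpow]
  rw [ht2, hx2]

lemma cp_symm (ψ : P a b c d ≃* P a b c d) (hcp : ∀ g, IsConj g (ψ g)) :
    ∀ g, IsConj g (ψ.symm g) := by
  intro g
  have := hcp (ψ.symm g)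
  rw [MulEquiv.apply_symm_apply] at this
  exact this.symm

end AnosovPf

/-- The fundamental group of an Anosov double has Grossman's Property A. -/
theorem anosovDouble_propertyA (a b c d : ℤ) (hdet : a * d - b * c = 1)
    (htr : 2 < |a + d|) :
    HasPropertyA (PresentedGroup (anosovDoubleRels a b c d)) := by
  intro φ hφ
  open AnosovPf in
  obtain ⟨γ, hγ⟩ := isConj_iff.mp (hφ T2)
  set ψ : P a b c d ≃* P a b c d := φ.trans (MulAut.conj γ⁻¹) with hψdef
  have hψ_apply : ∀ g, ψ g = γ⁻¹ * φ g * γ := by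
    intro g
    show (MulAut.conj γ⁻¹) (φ g) = _
    rw [MulAut.conj_apply, inv_inv]
  have hφ_from_ψ : ∀ g, φ g = γ * ψ g * γ⁻¹ := by
    intro g
    rw [hψ_apply]
    group
  have hψcp : ∀ g, IsConj g (ψ g) := by
    intro g
    refine (hφ g).trans ?_
    rw [hψ_apply]
    exact isConj_iff.mpr ⟨γ⁻¹, by group⟩
  have hψT2 : ψ T2 = T2 := by
    rw [hψ_apply, ← hγ]
    group
  have hψsymmcp := cp_symm (a := a) (b := b) (c := c) (d := d) ψ hψcp
  have hψsymmT2 : ψ.symm T2 = T2 := by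
    have h := congrArg ψ.symm hψT2
    rw [MulEquiv.symm_apply_apply] at h
    exact h.symm
  obtain ⟨m, hm⟩ := psiX2 hdet ψ hψcp hψT2
  obtain ⟨m', hm'⟩ := psiX2 hdet ψ.symm hψsymmcp hψsymmT2
  have hmm : m' * m = 1 := by
    have h1 : (X2 : P a b c d) = X2 ^ (m' * m) := by
      conv_lhs => rw [← MulEquiv.symm_apply_apply ψ X2]
      rw [hm, iH_0m, map_zpow, hm', iH_0m, ← zpow_mul]
    have h3 : (iH ((0:ℤ), (1:ℤ)) : P a b c d) = iH (0, m' * m) := by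
      rw [iH_0m, iH_0m, zpow_one]
      exact h1
    have h4 := iH_inj hdet h3
    have h5 := congrArg Prod.snd h4
    simp at h5
    omega
  have hcases : m = 1 ∨ m = -1 := by
    rcases Int.mul_eq_one_iff_eq_one_or_neg_one.mp hmm with ⟨_, h⟩ | ⟨_, h⟩
    · exact Or.inl h
    · exact Or.inr h
  rcases hcases with hm1 | hm1
  · -- m = 1 : ψ fixes H pointwise
    have hx2 : ψ X2 = X2 := by
      rw [hm, hm1, iH_0m, zpow_one]
    obtain ⟨q, hq⟩ := main_fix hdet htr ψ hψcp hψT2 (fixH ψ hψT2 hx2)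
    refine ⟨γ * iH (q, 0), ?_⟩
    intro g
    rw [hφ_from_ψ, hq g]
    group
  · -- m = -1 : twist by conjugation with T2 first
    set ψ₂ : P a b c d ≃* P a b c d := (MulAut.conj (T2 : P a b c d)).trans ψ with hψ₂def
    have hψ₂_apply : ∀ g, ψ₂ g = ψ (T2 * g * T2⁻¹) := by
      intro g
      show ψ ((MulAut.conj (T2 : P a b c d)) g) = _
      rw [MulAut.conj_apply]
    have hψ₂cp : ∀ g, IsConj g (ψ₂ g) := by
      intro g
      rw [hψ₂_apply]
      exact (isConj_iff.mpr ⟨T2, rfl⟩).trans (hψcp _)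
    have hψ₂T2 : ψ₂ T2 = T2 := by
      rw [hψ₂_apply]
      rw [show (T2 : P a b c d) * T2 * T2⁻¹ = T2 from by group]
      exact hψT2
    have hψ₂X2 : ψ₂ X2 = X2 := by
      rw [hψ₂_apply, t2x2, map_inv, hm, hm1, iH_0m]
      group
    obtain ⟨q, hq⟩ := main_fix hdet htr ψ₂ hψ₂cp hψ₂T2 (fixH ψ₂ hψ₂T2 hψ₂X2)
    refine ⟨γ * iH (q, 0) * T2⁻¹, ?_⟩
    intro g
    have hψg : ψ g = iH (q, 0) * (T2⁻¹ * g * T2) * (iH (q, 0))⁻¹ := by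
      have := hq (T2⁻¹ * g * T2)
      rw [hψ₂_apply] at this
      rw [show (T2 : P a b c d) * (T2⁻¹ * g * T2) * T2⁻¹ = g from by group] at this
      exact this
    rw [hφ_from_ψ, hψg]
    group
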